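/- arXiv:math/0409538 — 2 statements merged into one kernel-verified Lean document; each statement's English description precedes it below -/
import Mathlib

section
/- Let μ be a partition of n, use the total order <₁ on the super alphabet A, and let ρ be a partition of n with ρ ≰ μ' in dominance order. Then Σ_σ (−1)^{m(σ)} q^{p(σ)+inv(σ)} t^{maj(σ)} = 0, where the sum is over all super fillings σ : dg(μ) → A such that #{u ∈ dg(μ) : |σ(u)| = k} = ρ_k for every k. -/
open Finset MvPolynomial

namespace HHL

/-! ### Diagrams, fillings and the statistics `inv` and `maj` -/

/-- The cells of the Young diagram of the partition `μ` (given as the list of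
its row lengths `μ_1, μ_2, …`); the cell `(i,j)` lies in row `i` (from the
bottom, French style) and column `j`, with `1 ≤ i ≤ ℓ(μ)`, `1 ≤ j ≤ μ_i`. -/
def cells (μ : List ℕ) : Finset (ℕ × ℕ) :=
  (Finset.Icc 1 μ.length ×ˢ Finset.Icc 1 (μ.foldr max 0)).filter
    (fun u => u.2 ≤ μ.getD (u.1 - 1) 0)

/-- `μ` is a partition: a weakly decreasing list of positive integers. -/
def IsPartitionList (μ : List ℕ) : Prop := μ.Pairwise (· ≥ ·) ∧ ∀ x ∈ μ, 0 < x

/-- The arm of a cell: the number of cells strictly to its right in its row. -/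
def arm (μ : List ℕ) (u : ℕ × ℕ) : ℕ :=
  ((cells μ).filter (fun v => v.1 = u.1 ∧ u.2 < v.2)).card

/-- The leg of a cell: the number of cells strictly above it in its column. -/
def leg (μ : List ℕ) (u : ℕ × ℕ) : ℕ :=
  ((cells μ).filter (fun v => v.2 = u.2 ∧ u.1 < v.1)).card

/-- `u` precedes `v` in the reading order (row by row from the top row down,
left to right within each row). -/
def ReadBefore (u v : ℕ × ℕ) : Prop := v.1 < u.1 ∨ (u.1 = v.1 ∧ u.2 < v.2)

instance (u v : ℕ × ℕ) : Decidable (ReadBefore u v) := by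
  unfold ReadBefore; infer_instance

/-- `u` and `v` attack each other and `u` precedes `v` in reading order: either
they are in the same row with `u` to the left, or `u` is one row above `v` and
strictly to its right. -/
def AttackOrd (u v : ℕ × ℕ) : Prop :=
  (u.1 = v.1 ∧ u.2 < v.2) ∨ (u.1 = v.1 + 1 ∧ v.2 < u.2)

instance (u v : ℕ × ℕ) : Decidable (AttackOrd u v) := by
  unfold AttackOrd; infer_instance

/-- `u` and `v` attack each other. -/
def Attack (u v : ℕ × ℕ) : Prop := AttackOrd u v ∨ AttackOrd v u

instance (u v : ℕ × ℕ) : Decidable (Attack u v) := by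
  unfold Attack; infer_instance

section Stats

variable {V : Type} (μ : List ℕ) (Ind : V → V → Prop) [DecidableRel Ind] (σ : ℕ × ℕ → V)

/-- The set `Inv(σ)` of inversions of a filling `σ`, recorded as ordered pairs
`(u,v)` with `u` attacking `v`, `u` preceding `v` in reading order, and
`I(σ(u),σ(v)) = 1`; here `Ind x y` means `I(x,y) = 1` (for ordinary fillings
`Ind x y ↔ x > y`). -/
def invPairs : Finset ((ℕ × ℕ) × (ℕ × ℕ)) :=
  ((cells μ) ×ˢ (cells μ)).filter fun p => AttackOrd p.1 p.2 ∧ Ind (σ p.1) (σ p.2)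

/-- The descent set `Des(σ)`: cells `u = (i+1,j)` with `v = (i,j) ∈ dg(μ)` and
`I(σ(u),σ(v)) = 1`. -/
def desCells : Finset (ℕ × ℕ) :=
  (cells μ).filter fun u => (u.1 - 1, u.2) ∈ cells μ ∧ Ind (σ u) (σ (u.1 - 1, u.2))

/-- `maj(σ) = Σ_{u ∈ Des(σ)} (leg(u) + 1)`. -/
def majStat : ℕ := ∑ u ∈ desCells μ Ind σ, (leg μ u + 1)

/-- `inv(σ) = |Inv(σ)| − Σ_{u ∈ Des(σ)} arm(u)`. -/
def invStat : ℕ := (invPairs μ Ind σ).card - ∑ u ∈ desCells μ Ind σ, arm μ u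

end Stats

/-- For ordinary (positive-integer valued) fillings, `I(x,y) = 1` iff `x > y`. -/
def natInd : ℕ → ℕ → Prop := fun x y => y < x

instance : DecidableRel natInd := fun _ _ => by unfold natInd; infer_instance

/-- Extend a function defined on the cells of `μ` to a total function. -/
def extendF {V : Type} (μ : List ℕ) (d : V) (f : {u // u ∈ cells μ} → V) : ℕ × ℕ → V :=
  fun u => if h : u ∈ cells μ then f ⟨u, h⟩ else d

/-- A filling of `dg(μ)` with entries in `{1, …, N}`, encoded by a function to
`Fin N` (value `k` means the entry `k + 1`), as a total function `ℕ × ℕ → ℕ`. -/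
def natFill (μ : List ℕ) {N : ℕ} (f : {u // u ∈ cells μ} → Fin N) : ℕ × ℕ → ℕ :=
  extendF μ 0 fun u => (f u).val + 1

/-- Haglund's combinatorial formula
`C_μ(x_1,…,x_N;q,t) = Σ_σ q^{inv(σ)} t^{maj(σ)} x^σ`, a polynomial in
`x_1,…,x_N` with coefficients in `ℤ[q,t]`, where `q = C (X 0)`, `t = C (X 1)`. -/
noncomputable def Cmu (μ : List ℕ) (N : ℕ) :
    MvPolynomial (Fin N) (MvPolynomial (Fin 2) ℤ) :=
  ∑ f : {u // u ∈ cells μ} → Fin N,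
    C ((X 0 : MvPolynomial (Fin 2) ℤ) ^ invStat μ natInd (natFill μ f) *
       (X 1 : MvPolynomial (Fin 2) ℤ) ^ majStat μ natInd (natFill μ f)) *
    ∏ u, X (f u)

/-! ### Skew diagrams and LLT polynomials -/

/-- A pair of partitions `(λ, μ)` with `μ ⊆ λ`, representing the skew diagram
`λ∖μ`. -/
def IsSkewPair (p : List ℕ × List ℕ) : Prop :=
  IsPartitionList p.1 ∧ IsPartitionList p.2 ∧ ∀ i, p.2.getD i 0 ≤ p.1.getD i 0

/-- The cells of the skew diagram `λ∖μ`. -/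
def skewCells (p : List ℕ × List ℕ) : Finset (ℕ × ℕ) := cells p.1 \ cells p.2

/-- The content `c(u) = i − j` of the cell `u = (i,j)`. -/
def content (u : ℕ × ℕ) : ℤ := (u.1 : ℤ) - (u.2 : ℤ)

/-- The disjoint union of the cells of a tuple of skew diagrams. -/
abbrev TDom {k : ℕ} (ν : Fin k → List ℕ × List ℕ) : Type :=
  Σ i : Fin k, {u // u ∈ skewCells (ν i)}

/-- `f` (with `f ⟨i,u⟩` the entry of the `i`-th tableau at the cell `u`) is a
tuple of semistandard Young tableaux: entries weakly increasing along each row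
and strictly increasing up each column. -/
def IsSSYTtuple {k : ℕ} (ν : Fin k → List ℕ × List ℕ) (f : TDom ν → ℕ) : Prop :=
  ∀ i : Fin k, ∀ u v : {u // u ∈ skewCells (ν i)},
    (u.1.1 = v.1.1 ∧ u.1.2 ≤ v.1.2 → f ⟨i, u⟩ ≤ f ⟨i, v⟩) ∧
    (u.1.2 = v.1.2 ∧ u.1.1 < v.1.1 → f ⟨i, u⟩ < f ⟨i, v⟩)

instance {k : ℕ} (ν : Fin k → List ℕ × List ℕ) (f : TDom ν → ℕ) :
    Decidable (IsSSYTtuple ν f) := by unfold IsSSYTtuple; infer_instance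

/-- The number of inversions of a tuple of tableaux: pairs of entries
`T^(i)(u) > T^(j)(v)` with either `i < j` and `c(u) = c(v)`, or `i > j` and
`c(u) = c(v) + 1`. -/
def lltInv {k : ℕ} (ν : Fin k → List ℕ × List ℕ) (f : TDom ν → ℕ) : ℕ :=
  (Finset.univ.filter fun p : TDom ν × TDom ν =>
    ((p.1.1 < p.2.1 ∧ content p.1.2.1 = content p.2.2.1) ∨
     (p.2.1 < p.1.1 ∧ content p.1.2.1 = content p.2.2.1 + 1)) ∧
    f p.2 < f p.1).card

/-- The LLT polynomial `G_ν(x_1,…,x_N;q) = Σ_T q^{inv(T)} x^T` in `N`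
variables, with coefficients in `ℤ[q]` (`q = C Polynomial.X`); tableau entries
in `{1,…,N}` are encoded by `Fin N` (value `k` means entry `k + 1`). -/
noncomputable def llt {k : ℕ} (ν : Fin k → List ℕ × List ℕ) (N : ℕ) :
    MvPolynomial (Fin N) (Polynomial ℤ) :=
  ∑ f ∈ Finset.univ.filter (fun f : TDom ν → Fin N =>
      IsSSYTtuple ν (fun a => (f a).val + 1)),
    C (Polynomial.X ^ lltInv ν (fun a => (f a).val + 1)) * ∏ a, X (f a)

/-! ### The super alphabet -/

/-- The super alphabet `A = {1, 1̄, 2, 2̄, …}`: the letter `(a, b)` has absolute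
value `a + 1` and is negative (barred) iff `b = true`. -/
abbrev SLetter : Type := ℕ × Bool

/-- The absolute value of a super letter. -/
def sAbs (x : SLetter) : ℕ := x.1 + 1

/-- The ordering `<₁`: `1 < 1̄ < 2 < 2̄ < ⋯`. -/
def lt1 (x y : SLetter) : Prop :=
  x.1 < y.1 ∨ (x.1 = y.1 ∧ x.2 = false ∧ y.2 = true)

instance : DecidableRel lt1 := fun _ _ => by unfold lt1; infer_instance

/-- The ordering `<₂`: `1 < 2 < 3 < ⋯ < 3̄ < 2̄ < 1̄`. -/
def lt2 (x y : SLetter) : Prop :=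
  (x.2 = false ∧ y.2 = false ∧ x.1 < y.1) ∨ (x.2 = false ∧ y.2 = true) ∨
    (x.2 = true ∧ y.2 = true ∧ y.1 < x.1)

instance : DecidableRel lt2 := fun _ _ => by unfold lt2; infer_instance

/-- Given a total order `lt` on the super alphabet, `IndOf lt x y` holds iff
`I(x,y) = 1`, i.e. `x > y`, or `x = y` is a negative letter. -/
def IndOf (lt : SLetter → SLetter → Prop) (x y : SLetter) : Prop :=
  lt y x ∨ (x = y ∧ x.2 = true)

instance (lt : SLetter → SLetter → Prop) [DecidableRel lt] : DecidableRel (IndOf lt) :=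
  fun _ _ => by unfold IndOf; infer_instance

/-- A super filling of `dg(μ)` with letters of absolute value at most `N`, as a
total function (the value `(a, b)` with `a : Fin N` means the letter of
absolute value `a + 1`, barred iff `b`). -/
def superFill (μ : List ℕ) {N : ℕ} (f : {u // u ∈ cells μ} → Fin N × Bool) :
    ℕ × ℕ → SLetter :=
  extendF μ (0, false) fun u => ((f u).1.val, (f u).2)

/-- A super filling with entries in `{1, 1̄}` (`f u = true` means entry `1̄`). -/
def boolFill (μ : List ℕ) (f : {u // u ∈ cells μ} → Bool) : ℕ × ℕ → SLetter :=
  extendF μ (0, false) fun u => ((0 : ℕ), f u)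

/-- `m(σ)`: the number of negative entries of a super filling. -/
def negCount (μ : List ℕ) (σ : ℕ × ℕ → SLetter) : ℕ :=
  ((cells μ).filter fun u => (σ u).2 = true).card

/-- `p(σ)`: the number of positive entries of a super filling. -/
def posCount (μ : List ℕ) (σ : ℕ × ℕ → SLetter) : ℕ :=
  ((cells μ).filter fun u => (σ u).2 = false).card

/-- A super filling is non-attacking if entries in attacking cells have
distinct absolute values. -/
def NonAttacking (μ : List ℕ) (σ : ℕ × ℕ → SLetter) : Prop :=
  ∀ u ∈ cells μ, ∀ v ∈ cells μ, Attack u v → sAbs (σ u) ≠ sAbs (σ v)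

instance (μ : List ℕ) (σ : ℕ × ℕ → SLetter) : Decidable (NonAttacking μ σ) := by
  unfold NonAttacking; infer_instance

/-! ### Conjugate partitions, ribbons, connectivity -/

/-- `conj μ j = μ'_j`, the number of rows of `μ` of length at least `j`. -/
def conj (μ : List ℕ) (j : ℕ) : ℕ :=
  ((Finset.range μ.length).filter fun i => j ≤ μ.getD i 0).card

/-- The transpose `μ'` of a partition, as a list. -/
def conjList (μ : List ℕ) : List ℕ :=
  (List.range (μ.foldr max 0)).map fun j => conj μ (j + 1)

/-- Transpose of a skew shape: `λ∖μ ↦ λ'∖μ'`. -/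
def transposePair (p : List ℕ × List ℕ) : List ℕ × List ℕ :=
  (conjList p.1, conjList p.2)

/-- Two cells are adjacent (share an edge). -/
def AdjCell (u v : ℕ × ℕ) : Prop :=
  (u.1 = v.1 ∧ (u.2 = v.2 + 1 ∨ v.2 = u.2 + 1)) ∨
  (u.2 = v.2 ∧ (u.1 = v.1 + 1 ∨ v.1 = u.1 + 1))

/-- A set of cells is connected (any two cells are joined by a path of
edge-adjacent cells inside the set). -/
def ConnSet (s : Finset (ℕ × ℕ)) : Prop :=
  ∀ u ∈ s, ∀ v ∈ s, Relation.ReflTransGen (fun a b => a ∈ s ∧ b ∈ s ∧ AdjCell a b) u v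

/-- A set of cells contains no 2×2 block. -/
def No2x2 (s : Finset (ℕ × ℕ)) : Prop :=
  ¬ ∃ i j, (i, j) ∈ s ∧ (i + 1, j) ∈ s ∧ (i, j + 1) ∈ s ∧ (i + 1, j + 1) ∈ s

/-! ### Reading words and cocharge -/

/-- Boolean comparison realizing the reading order. -/
def readLe (u v : ℕ × ℕ) : Bool :=
  decide (v.1 < u.1) || (decide (u.1 = v.1) && decide (u.2 ≤ v.2))

/-- The reading word of a filling `σ` of `dg(μ)`: its entries listed in reading
order. -/
noncomputable def readingWord (μ : List ℕ) (σ : ℕ × ℕ → ℕ) : List ℕ :=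
  ((cells μ).toList.mergeSort readLe).map σ

/-- Boolean comparison for the cocharge-word ordering of the cells: entries of
`σ` decreasing and, within constant segments of `σ`, cells in decreasing
reading order. -/
def cwordLe (σ : ℕ × ℕ → ℕ) (u v : ℕ × ℕ) : Bool :=
  decide (σ v < σ u) ||
    (decide (σ u = σ v) &&
      (decide (u.1 < v.1) || (decide (u.1 = v.1) && decide (v.2 ≤ u.2))))

/-- The cocharge word of a filling: the row indices of the cells, listed so that
the entries are decreasing, with ties broken by decreasing reading order. -/
noncomputable def cword (μ : List ℕ) (σ : ℕ × ℕ → ℕ) : List ℕ :=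
  ((cells μ).toList.mergeSort (cwordLe σ)).map Prod.fst

/-- Cocharge of a word that is a permutation of `{1,…,n}`:
`Σ_{i ∈ D(w⁻¹)} (n − i)`, where `i ∈ D(w⁻¹)` iff `i + 1` occurs before `i`. -/
def cochargePerm (w : List ℕ) : ℕ :=
  ∑ i ∈ Finset.Icc 1 (w.length - 1),
    if w.idxOf (i + 1) < w.idxOf i then w.length - i else 0

/-- The (0-based) positions of the letter `a` in `w`. -/
def letterPositions (w : List ℕ) (a : ℕ) : Finset ℕ :=
  (Finset.range w.length).filter fun k => w.getD k 0 = a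

/-- The position `k_i` for the letter `a`: the rightmost occurrence of `a`
strictly to the left of `bound` if there is one, otherwise the rightmost
occurrence of `a`. -/
def choosePos (w : List ℕ) (a : ℕ) (bound : Option ℕ) : Option ℕ :=
  match bound with
  | none => (letterPositions w a).max
  | some b =>
      let s := (letterPositions w a).filter (· < b)
      if s.Nonempty then s.max else (letterPositions w a).max

/-- `posListAux w i = [k_i, k_{i-1}, …, k_1]` (as options). -/
def posListAux (w : List ℕ) : ℕ → List (Option ℕ)
  | 0 => []
  | i + 1 =>
      let rest := posListAux w i
      choosePos w (i + 1) (rest.headD none) :: rest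

/-- The set `S = {k_1, …, k_l}` of positions extracted in the cocharge
recursion, where `l` is the largest letter of `w`. -/
def extractSet (w : List ℕ) : Finset ℕ :=
  ((posListAux w (w.foldr max 0)).filterMap id).toFinset

/-- The subword of `w` at the positions in `S` (in increasing position order). -/
def subwordOn (w : List ℕ) (S : Finset ℕ) : List ℕ :=
  ((List.range w.length).filter fun k => decide (k ∈ S)).map fun k => w.getD k 0

/-- The subword of `w` at the positions *not* in `S`. -/
def subwordOff (w : List ℕ) (S : Finset ℕ) : List ℕ :=
  ((List.range w.length).filter fun k => decide (k ∉ S)).map fun k => w.getD k 0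

/-- Fuelled cocharge recursion: `cocharge w = cocharge y + cocharge z`, where
`y` is the extracted subword (a permutation of `{1,…,l}`) and `z` is the
complementary subword. -/
def cochargeAux : ℕ → List ℕ → ℕ
  | 0, _ => 0
  | fuel + 1, w =>
      let S := extractSet w
      let z := subwordOff w S
      if z.length < w.length then cochargePerm (subwordOn w S) + cochargeAux fuel z
      else cochargePerm (subwordOn w S)

/-- The cocharge of a word of partition content. -/
def cocharge (w : List ℕ) : ℕ := cochargeAux w.length w

/-! ### Yamanouchi words and crystal operators -/

/-- A word is Yamanouchi if every final segment contains at least as many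
letters `i` as letters `i + 1`, for every `i ≥ 1`. -/
def IsYamanouchi (w : List ℕ) : Prop :=
  ∀ k i, ((w.drop k).count (i + 2)) ≤ ((w.drop k).count (i + 1))

noncomputable instance : DecidablePred IsYamanouchi := fun _ => Classical.propDecidable _

/-- The letters `i` (close, `false`) and `i + 1` (open, `true`) of `w`, as a
list of (position, is-open) tokens in position order. -/
def tokens (i : ℕ) (w : List ℕ) : List (ℕ × Bool) :=
  (List.range w.length).filterMap fun k =>
    if w.getD k 0 = i + 1 then some (k, true)
    else if w.getD k 0 = i then some (k, false) else none

/-- Stack pass performing the repeated deletion of adjacent matched pairs (an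
`i + 1` immediately followed by an `i` in the current subword). The first
argument is the (reversed) list of surviving tokens so far. -/
def reduceTokens : List (ℕ × Bool) → List (ℕ × Bool) → List (ℕ × Bool)
  | acc, [] => acc.reverse
  | a :: acc', t :: rest =>
      if a.2 ∧ ¬ t.2 then reduceTokens acc' rest
      else reduceTokens (t :: a :: acc') rest
  | [], t :: rest => reduceTokens [t] rest

/-- The surviving letters of `{i, i + 1}` in `w` after matched-pair deletion. -/
def survivors (i : ℕ) (w : List ℕ) : List (ℕ × Bool) := reduceTokens [] (tokens i w)

/-- The crystal raising operator `E_i` on words: change the first surviving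
(unmatched) letter `i + 1` to `i`; `none` encodes `E_i w = 0`. -/
def crystalE (i : ℕ) (w : List ℕ) : Option (List ℕ) :=
  match (survivors i w).find? (fun t => t.2) with
  | none => none
  | some t => some (w.set t.1 i)

/-! ### Straight-shape tableaux and Schur polynomials -/

/-- Semistandard tableau condition for a filling of the cells of `lam`. -/
def IsSSYTcells (lam : List ℕ) (T : {u // u ∈ cells lam} → ℕ) : Prop :=
  ∀ u v : {u // u ∈ cells lam},
    (u.1.1 = v.1.1 ∧ u.1.2 ≤ v.1.2 → T u ≤ T v) ∧
    (u.1.2 = v.1.2 ∧ u.1.1 < v.1.1 → T u < T v)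

instance (lam : List ℕ) (T : {u // u ∈ cells lam} → ℕ) :
    Decidable (IsSSYTcells lam T) := by unfold IsSSYTcells; infer_instance

/-- The Schur polynomial `s_λ(x_1,…,x_N) = Σ_{T ∈ SSYT(λ), entries ≤ N} x^T`,
with coefficients in a commutative ring `R`. -/
noncomputable def schurPoly (R : Type) [CommRing R] (lam : List ℕ) (N : ℕ) :
    MvPolynomial (Fin N) R :=
  ∑ T ∈ Finset.univ.filter (fun T : {u // u ∈ cells lam} → Fin N =>
      IsSSYTcells lam (fun u => (T u).val + 1)),
    ∏ u, X (T u)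

/-- The decreasing list of parts of `p : Nat.Partition n`. -/
def partnList {n : ℕ} (p : n.Partition) : List ℕ :=
  (Multiset.sort p.parts (· ≤ ·)).reverse



/-! ### Auxiliary lemmas for Statement 7 -/

section Aux

lemma list_getD_le_foldr_max (μ : List ℕ) (i : ℕ) (h : i < μ.length) :
    μ.getD i 0 ≤ μ.foldr max 0 := by
  induction μ generalizing i with
  | nil => simp at h
  | cons x xs ih =>
    cases i with
    | zero => simp [List.getD]
    | succ n =>
      simp only [List.getD_cons_succ, List.foldr_cons]
      exact le_trans (ih n (by simpa using h)) (le_max_right _ _)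

lemma mem_cells {μ : List ℕ} {u : ℕ × ℕ} :
    u ∈ cells μ ↔ 1 ≤ u.1 ∧ u.1 ≤ μ.length ∧ 1 ≤ u.2 ∧ u.2 ≤ μ.getD (u.1 - 1) 0 := by
  unfold cells
  simp only [Finset.mem_filter, Finset.mem_product, Finset.mem_Icc]
  constructor
  · rintro ⟨⟨⟨h1,h2⟩,⟨h3,_⟩⟩,h5⟩; exact ⟨h1,h2,h3,h5⟩
  · rintro ⟨h1,h2,h3,h5⟩
    exact ⟨⟨⟨h1,h2⟩,⟨h3, le_trans h5 (list_getD_le_foldr_max μ _ (by omega))⟩⟩, h5⟩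

lemma indOf_lt1_iff (x y : SLetter) :
    IndOf lt1 x y ↔ (if x.1 = y.1 then x.2 = true else y.1 < x.1) := by
  unfold IndOf lt1
  rcases x with ⟨a, bx⟩; rcases y with ⟨b, bb⟩
  by_cases h : a = b
  · subst h
    cases bx <;> cases bb <;> simp [Prod.ext_iff] <;> omega
  · cases bx <;> cases bb <;> simp [Prod.ext_iff, h, Ne.symm h] <;> omega

lemma ind_trans {x y z : SLetter} (h1 : ¬ IndOf lt1 x y) (h2 : ¬ IndOf lt1 y z) :
    ¬ IndOf lt1 x z := by
  rw [indOf_lt1_iff] at h1 h2 ⊢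
  by_cases hxy : x.1 = y.1 <;> by_cases hyz : y.1 = z.1 <;> by_cases hxz : x.1 = z.1 <;>
    simp_all <;> omega

lemma readBefore_asymm {u v : ℕ × ℕ} (h : ReadBefore u v) : ¬ ReadBefore v u := by
  unfold ReadBefore at *; omega

lemma attackOrd_readBefore {u v : ℕ × ℕ} (h : AttackOrd u v) : ReadBefore u v := by
  unfold AttackOrd ReadBefore at *; omega

lemma exists_last (s : Finset (ℕ × ℕ)) (h : s.Nonempty) :
    ∃ u ∈ s, ∀ v ∈ s, v ≠ u → ReadBefore v u := by
  set B := s.sup Prod.snd with hB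
  have hbd : ∀ v ∈ s, v.2 ≤ B := fun v hv => Finset.le_sup (f := Prod.snd) hv
  obtain ⟨u, hu, hmin⟩ := s.exists_min_image (fun u => u.1 * (B+1) + (B - u.2)) h
  refine ⟨u, hu, fun v hv hne => ?_⟩
  have h1 := hmin v hv
  have h2 := hbd v hv
  have h3 := hbd u hu
  unfold ReadBefore
  rcases lt_trichotomy u.1 v.1 with hlt | heq | hgt
  · exact Or.inl hlt
  · right
    refine ⟨heq.symm, ?_⟩
    rw [heq] at h1
    have h4 : B - u.2 ≤ B - v.2 := Nat.le_of_add_le_add_left h1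
    have h5 : u ≠ v := fun hh => hne hh.symm
    have h6 : u.2 ≠ v.2 := by
      intro hh; exact h5 (Prod.ext heq hh)
    omega
  · exfalso
    have e1 : v.1 * (B+1) + (B - v.2) < v.1 * (B+1) + (B+1) :=
      Nat.add_lt_add_left (by omega) _
    have e2 : (v.1 + 1) * (B+1) ≤ u.1 * (B+1) :=
      Nat.mul_le_mul_right _ (by omega)
    have e3 : u.1 * (B+1) ≤ u.1 * (B+1) + (B - u.2) := Nat.le_add_right _ _
    rw [Nat.succ_mul] at e2
    omega

noncomputable def lastCell (s : Finset (ℕ × ℕ)) : ℕ × ℕ :=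
  if h : s.Nonempty then (exists_last s h).choose else (0, 0)

lemma lastCell_mem {s : Finset (ℕ × ℕ)} (h : s.Nonempty) : lastCell s ∈ s := by
  simp only [lastCell, dif_pos h]
  exact (exists_last s h).choose_spec.1

lemma lastCell_last {s : Finset (ℕ × ℕ)} (h : s.Nonempty) :
    ∀ v ∈ s, v ≠ lastCell s → ReadBefore v (lastCell s) := by
  simp only [lastCell, dif_pos h]
  exact (exists_last s h).choose_spec.2

open scoped Classical in
/-- Cells possessing a later attacking cell of the same (absolute) value. -/
noncomputable def candSet (μ : List ℕ) (a : ℕ × ℕ → ℕ) : Finset (ℕ × ℕ) :=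
  (cells μ).filter (fun u => ∃ v ∈ cells μ, AttackOrd u v ∧ a v = a u)

lemma mk_cand {μ : List ℕ} {a : ℕ × ℕ → ℕ} {w v : ℕ × ℕ} (hw : w ∈ cells μ)
    (hv : v ∈ cells μ) (hat : AttackOrd w v) (ha : a v = a w) : w ∈ candSet μ a := by
  classical
  exact Finset.mem_filter.mpr ⟨hw, ⟨v, hv, hat, ha⟩⟩

lemma no_cand_after {μ : List ℕ} {a : ℕ × ℕ → ℕ} (hne : (candSet μ a).Nonempty)
    {w : ℕ × ℕ} (hw : ReadBefore (lastCell (candSet μ a)) w) : w ∉ candSet μ a := by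
  intro hmem
  by_cases he : w = lastCell (candSet μ a)
  · rw [he] at hw; exact readBefore_asymm hw hw
  · exact readBefore_asymm hw (lastCell_last hne w hmem he)

lemma lastCell_cells {μ : List ℕ} {a : ℕ × ℕ → ℕ} (hne : (candSet μ a).Nonempty) :
    lastCell (candSet μ a) ∈ cells μ :=
  (Finset.mem_filter.mp (lastCell_mem hne)).1

lemma pick_exists {μ : List ℕ} {a : ℕ × ℕ → ℕ} (hne : (candSet μ a).Nonempty) :
    ∃ v ∈ cells μ, AttackOrd (lastCell (candSet μ a)) v ∧ a v = a (lastCell (candSet μ a)) := by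
  classical
  exact (Finset.mem_filter.mp (lastCell_mem hne)).2

lemma pick_unique {μ : List ℕ} {a : ℕ × ℕ → ℕ} (hne : (candSet μ a).Nonempty)
    {w1 w2 : ℕ × ℕ} (h1 : w1 ∈ cells μ) (h2 : w2 ∈ cells μ)
    (ha1 : AttackOrd (lastCell (candSet μ a)) w1) (hv1 : a w1 = a (lastCell (candSet μ a)))
    (ha2 : AttackOrd (lastCell (candSet μ a)) w2) (hv2 : a w2 = a (lastCell (candSet μ a))) :
    w1 = w2 := by
  set c := lastCell (candSet μ a) with hc
  by_contra hne12
  -- produce an element of candSet strictly after c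
  have key : ∀ x y : ℕ × ℕ, x ∈ cells μ → y ∈ cells μ → AttackOrd c x → a x = a c →
      AttackOrd c y → a y = a c → AttackOrd x y →
      False := by
    intro x y hx hy hax hvx hay hvy hxy
    have hxc : x ∈ candSet μ a := mk_cand hx hy hxy (by rw [hvx, hvy])
    exact no_cand_after hne (attackOrd_readBefore hax) hxc
  rcases ha1 with ⟨hr1, hcol1⟩ | ⟨hr1, hcol1⟩ <;> rcases ha2 with ⟨hr2, hcol2⟩ | ⟨hr2, hcol2⟩
  · -- both same row as c
    have hcc : w1.2 ≠ w2.2 := by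
      intro hh; exact hne12 (Prod.ext (hr1.symm.trans hr2) hh)
    rcases lt_or_gt_of_ne hcc with hl | hl
    · exact key w1 w2 h1 h2 (Or.inl ⟨hr1, hcol1⟩) hv1 (Or.inl ⟨hr2, hcol2⟩) hv2
        (Or.inl ⟨hr1.symm.trans hr2, hl⟩)
    · exact key w2 w1 h2 h1 (Or.inl ⟨hr2, hcol2⟩) hv2 (Or.inl ⟨hr1, hcol1⟩) hv1
        (Or.inl ⟨hr2.symm.trans hr1, hl⟩)
  · -- w1 same row, w2 row below: w1 attacks w2
    exact key w1 w2 h1 h2 (Or.inl ⟨hr1, hcol1⟩) hv1 (Or.inr ⟨hr2, hcol2⟩) hv2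
      (Or.inr ⟨by omega, by omega⟩)
  · exact key w2 w1 h2 h1 (Or.inl ⟨hr2, hcol2⟩) hv2 (Or.inr ⟨hr1, hcol1⟩) hv1
      (Or.inr ⟨by omega, by omega⟩)
  · -- both row below c
    have hcc : w1.2 ≠ w2.2 := by
      intro hh; exact hne12 (Prod.ext (by omega) hh)
    rcases lt_or_gt_of_ne hcc with hl | hl
    · exact key w1 w2 h1 h2 (Or.inr ⟨hr1, hcol1⟩) hv1 (Or.inr ⟨hr2, hcol2⟩) hv2
        (Or.inl ⟨by omega, hl⟩)
    · exact key w2 w1 h2 h1 (Or.inr ⟨hr2, hcol2⟩) hv2 (Or.inr ⟨hr1, hcol1⟩) hv1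
        (Or.inl ⟨by omega, hl⟩)

lemma pick_below {μ : List ℕ} {a : ℕ × ℕ → ℕ} (hne : (candSet μ a).Nonempty)
    (hb : ((lastCell (candSet μ a)).1 - 1, (lastCell (candSet μ a)).2) ∈ cells μ) :
    a ((lastCell (candSet μ a)).1 - 1, (lastCell (candSet μ a)).2)
      ≠ a (lastCell (candSet μ a)) := by
  set c := lastCell (candSet μ a) with hc
  intro heq
  obtain ⟨v, hv, hav, hval⟩ := pick_exists hne
  rw [← hc] at hav hval
  have hc1 : 1 ≤ c.1 := by rw [hc]; exact (mem_cells.mp (lastCell_cells hne)).1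
  have hb1 : (c.1 - 1, c.2).1 = c.1 - 1 := rfl
  rcases hav with ⟨hr, hcol⟩ | ⟨hr, hcol⟩
  · -- v same row right of c: v attacks (c.1-1, c.2)
    have hvc : v ∈ candSet μ a :=
      mk_cand hv hb (Or.inr ⟨by simp; omega, by simp; omega⟩) (by rw [heq, hval])
    exact no_cand_after hne (attackOrd_readBefore (Or.inl ⟨hr, hcol⟩)) hvc
  · -- v row below left of c: v attacks (c.1-1, c.2) in the same row
    have hvc : v ∈ candSet μ a :=
      mk_cand hv hb (Or.inl ⟨by simp; omega, by simp; omega⟩) (by rw [heq, hval])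
    exact no_cand_after hne (attackOrd_readBefore (Or.inr ⟨hr, hcol⟩)) hvc

open scoped Classical in
lemma sum_arm_le_card_invPairs (μ : List ℕ) (σ : ℕ × ℕ → SLetter) :
    ∑ u ∈ desCells μ (IndOf lt1) σ, arm μ u ≤ (invPairs μ (IndOf lt1) σ).card := by
  classical
  have hsum : ∑ u ∈ desCells μ (IndOf lt1) σ, arm μ u =
      ((desCells μ (IndOf lt1) σ).sigma
        (fun u => (cells μ).filter (fun v => v.1 = u.1 ∧ u.2 < v.2))).card := by
    rw [Finset.card_sigma]; rfl
  rw [hsum]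
  apply Finset.card_le_card_of_injOn
    (fun p => if IndOf lt1 (σ p.1) (σ p.2) then (p.1, p.2) else (p.2, (p.1.1 - 1, p.1.2)))
  · rintro ⟨u, v⟩ hp
    simp only [Finset.mem_coe] at hp ⊢
    simp only [Finset.mem_sigma, Finset.mem_filter, desCells] at hp
    obtain ⟨⟨huc, hbc, hdes⟩, hvc, hrow, hcol⟩ := hp
    have hu1 : 1 ≤ u.1 := (mem_cells.mp huc).1
    by_cases hI : IndOf lt1 (σ u) (σ v)
    · simp only [hI, if_pos]
      rw [invPairs, Finset.mem_filter, Finset.mem_product]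
      exact ⟨⟨huc, hvc⟩, Or.inl ⟨hrow.symm, hcol⟩, hI⟩
    · simp only [hI, if_neg, if_false]
      have hI2 : IndOf lt1 (σ v) (σ (u.1 - 1, u.2)) := by
        by_contra hI2
        exact ind_trans hI hI2 hdes
      have hat : AttackOrd v (u.1 - 1, u.2) :=
        Or.inr ⟨show v.1 = u.1 - 1 + 1 by omega, show u.2 < v.2 from hcol⟩
      rw [invPairs, Finset.mem_filter, Finset.mem_product]
      exact ⟨⟨hvc, hbc⟩, hat, hI2⟩
  · rintro ⟨u, v⟩ hp ⟨u', v'⟩ hp' heq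
    simp only [Finset.coe_sigma, Set.mem_sigma_iff, Finset.mem_coe, Finset.mem_filter,
      desCells] at hp hp'
    obtain ⟨hu, hvc, hrow, hcol⟩ := hp
    obtain ⟨hu', hvc', hrow', hcol'⟩ := hp'
    have hu1 : 1 ≤ u.1 := (mem_cells.mp hu.1).1
    have hu1' : 1 ≤ u'.1 := (mem_cells.mp hu'.1).1
    dsimp only at heq
    by_cases hI : IndOf lt1 (σ u) (σ v) <;> by_cases hI' : IndOf lt1 (σ u') (σ v') <;>
      simp only [hI, hI', if_pos, if_neg, if_false, Prod.mk.injEq] at heq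
    · obtain ⟨h1, h2⟩ := heq
      exact Sigma.ext h1 (heq_of_eq h2)
    · exfalso
      obtain ⟨h1, h2⟩ := heq
      simp [Prod.ext_iff] at h1 h2
      omega
    · exfalso
      obtain ⟨h1, h2⟩ := heq
      simp [Prod.ext_iff] at h1 h2
      omega
    · obtain ⟨h1, h2, h3⟩ := heq
      have huu : u = u' := Prod.ext (by omega) h3
      exact Sigma.ext huu (heq_of_eq h1)

lemma attackOrd_irrefl (u : ℕ × ℕ) : ¬ AttackOrd u u := by
  unfold AttackOrd; omega

lemma attackOrd_ne {u v : ℕ × ℕ} (h : AttackOrd u v) : u ≠ v := by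
  intro he; rw [he] at h; exact attackOrd_irrefl v h

lemma ind_congr_right {x y y' : SLetter} (h : y'.1 = y.1) :
    IndOf lt1 x y' ↔ IndOf lt1 x y := by
  rw [indOf_lt1_iff, indOf_lt1_iff, h]

lemma ind_congr_left_ne {x x' y : SLetter} (h : x'.1 = x.1) (hne : x.1 ≠ y.1) :
    IndOf lt1 x' y ↔ IndOf lt1 x y := by
  rw [indOf_lt1_iff, indOf_lt1_iff, h, if_neg hne, if_neg hne]

lemma ind_eq_fst {x y : SLetter} (h : x.1 = y.1) :
    IndOf lt1 x y ↔ x.2 = true := by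
  rw [indOf_lt1_iff, if_pos h]

section Flip

variable {μ : List ℕ} {σ σ' : ℕ × ℕ → SLetter} {c w₀ : ℕ × ℕ}
variable (hcC : c ∈ cells μ)
variable (habs : ∀ u ∈ cells μ, (σ' u).1 = (σ u).1)
variable (hoff : ∀ u ∈ cells μ, u ≠ c → σ' u = σ u)
variable (hw0 : w₀ ∈ cells μ) (hatt : AttackOrd c w₀) (heqv : (σ w₀).1 = (σ c).1)
variable (huniq : ∀ w ∈ cells μ, AttackOrd c w → (σ w).1 = (σ c).1 → w = w₀)
variable (hbelow : (c.1 - 1, c.2) ∈ cells μ → (σ (c.1 - 1, c.2)).1 ≠ (σ c).1)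

include hcC habs hoff in
lemma desCells_flip (hbelow : (c.1 - 1, c.2) ∈ cells μ → (σ (c.1 - 1, c.2)).1 ≠ (σ c).1) :
    desCells μ (IndOf lt1) σ' = desCells μ (IndOf lt1) σ := by
  classical
  unfold desCells
  apply Finset.filter_congr
  intro u huc
  have hiff : (u.1 - 1, u.2) ∈ cells μ →
      (IndOf lt1 (σ' u) (σ' (u.1 - 1, u.2)) ↔ IndOf lt1 (σ u) (σ (u.1 - 1, u.2))) := by
    intro hbc
    have hub : u ≠ (u.1 - 1, u.2) := by
      have h1 : 1 ≤ (u.1 - 1, u.2).1 := (mem_cells.mp hbc).1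
      intro he
      have := congrArg Prod.fst he
      simp at this h1
      omega
    by_cases huc' : u = c
    · subst huc'
      have hfst : (σ (u.1 - 1, u.2)).1 ≠ (σ u).1 := hbelow hbc
      rw [hoff _ hbc (Ne.symm hub)]
      exact ind_congr_left_ne (habs u huc) (fun h => hfst h.symm)
    · rw [hoff _ huc huc']
      exact ind_congr_right (habs _ hbc)
  constructor
  · rintro ⟨h1, h2⟩; exact ⟨h1, (hiff h1).mp h2⟩
  · rintro ⟨h1, h2⟩; exact ⟨h1, (hiff h1).mpr h2⟩

include hcC habs hoff hw0 hatt heqv huniq in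
lemma invPairs_mem_iff {p : (ℕ × ℕ) × (ℕ × ℕ)} (hp : p ≠ (c, w₀)) :
    p ∈ invPairs μ (IndOf lt1) σ' ↔ p ∈ invPairs μ (IndOf lt1) σ := by
  classical
  unfold invPairs
  simp only [Finset.mem_filter, Finset.mem_product]
  constructor <;> rintro ⟨⟨h1, h2⟩, h3, h4⟩ <;> refine ⟨⟨h1, h2⟩, h3, ?_⟩
  · -- σ' inversion to σ inversion
    have key : IndOf lt1 (σ' p.1) (σ' p.2) ↔ IndOf lt1 (σ p.1) (σ p.2) := by
      by_cases e1 : p.1 = c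
      · have e2 : p.2 ≠ c := by rw [← e1]; exact fun he => (attackOrd_ne h3) he.symm
        have e3 : p.2 ≠ w₀ := by
          intro he; exact hp (Prod.ext e1 he)
        have e4 : (σ p.2).1 ≠ (σ c).1 := by
          intro he; exact e3 (huniq p.2 h2 (e1 ▸ h3) he)
        rw [hoff _ h2 e2, e1]
        exact ind_congr_left_ne (habs c hcC) (fun h => e4 (by rw [← e1] at h ⊢; exact h.symm) )
      · by_cases e2 : p.2 = c
        · rw [hoff _ h1 e1, e2]
          exact ind_congr_right (habs c hcC)
        · rw [hoff _ h1 e1, hoff _ h2 e2]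
    exact key.mp h4
  · have key : IndOf lt1 (σ' p.1) (σ' p.2) ↔ IndOf lt1 (σ p.1) (σ p.2) := by
      by_cases e1 : p.1 = c
      · have e2 : p.2 ≠ c := by rw [← e1]; exact fun he => (attackOrd_ne h3) he.symm
        have e3 : p.2 ≠ w₀ := by
          intro he; exact hp (Prod.ext e1 he)
        have e4 : (σ p.2).1 ≠ (σ c).1 := by
          intro he; exact e3 (huniq p.2 h2 (e1 ▸ h3) he)
        rw [hoff _ h2 e2, e1]
        exact ind_congr_left_ne (habs c hcC) (fun h => e4 (by rw [← e1] at h ⊢; exact h.symm) )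
      · by_cases e2 : p.2 = c
        · rw [hoff _ h1 e1, e2]
          exact ind_congr_right (habs c hcC)
        · rw [hoff _ h1 e1, hoff _ h2 e2]
    exact key.mpr h4

include hcC habs hoff hw0 hatt heqv huniq in
lemma invPairs_flip (hflip : (σ' c).2 = !(σ c).2) (hbar : (σ c).2 = false) :
    invPairs μ (IndOf lt1) σ' = insert (c, w₀) (invPairs μ (IndOf lt1) σ) ∧
      (c, w₀) ∉ invPairs μ (IndOf lt1) σ := by
  classical
  have hcw : c ≠ w₀ := attackOrd_ne hatt
  have hnotin : (c, w₀) ∉ invPairs μ (IndOf lt1) σ := by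
    unfold invPairs
    simp only [Finset.mem_filter, Finset.mem_product, not_and]
    intro _ _
    rw [ind_eq_fst heqv.symm, hbar]
    simp
  have hin : (c, w₀) ∈ invPairs μ (IndOf lt1) σ' := by
    unfold invPairs
    simp only [Finset.mem_filter, Finset.mem_product]
    refine ⟨⟨hcC, hw0⟩, hatt, ?_⟩
    have : (σ' c).1 = (σ' w₀).1 := by
      rw [habs c hcC, habs w₀ hw0, heqv]
    rw [ind_eq_fst this, hflip, hbar]
    rfl
  refine ⟨?_, hnotin⟩
  ext p
  by_cases hp : p = (c, w₀)
  · subst hp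
    simp [hin]
  · rw [Finset.mem_insert]
    rw [invPairs_mem_iff hcC habs hoff hw0 hatt heqv huniq hp]
    simp [hp]

include hcC hoff in
lemma negCount_flip (hflip : (σ' c).2 = !(σ c).2) (hbar : (σ c).2 = false) :
    negCount μ σ' = negCount μ σ + 1 := by
  classical
  unfold negCount
  have hset : (cells μ).filter (fun u => (σ' u).2 = true) =
      insert c ((cells μ).filter (fun u => (σ u).2 = true)) := by
    ext u
    simp only [Finset.mem_insert, Finset.mem_filter]
    constructor
    · rintro ⟨h1, h2⟩
      by_cases he : u = c
      · exact Or.inl he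
      · right; rw [hoff u h1 he] at h2; exact ⟨h1, h2⟩
    · rintro (he | ⟨h1, h2⟩)
      · subst he; exact ⟨hcC, by rw [hflip, hbar]; rfl⟩
      · refine ⟨h1, ?_⟩
        by_cases he : u = c
        · subst he; rw [hbar] at h2; cases h2
        · rw [hoff u h1 he]; exact h2
  rw [hset, Finset.card_insert_of_notMem]
  simp [Finset.mem_filter, hbar]

include hcC hoff in
lemma posCount_flip (hflip : (σ' c).2 = !(σ c).2) (hbar : (σ c).2 = false) :
    posCount μ σ = posCount μ σ' + 1 := by
  classical
  unfold posCount
  have hset : (cells μ).filter (fun u => (σ u).2 = false) =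
      insert c ((cells μ).filter (fun u => (σ' u).2 = false)) := by
    ext u
    simp only [Finset.mem_insert, Finset.mem_filter]
    constructor
    · rintro ⟨h1, h2⟩
      by_cases he : u = c
      · exact Or.inl he
      · right; rw [← hoff u h1 he] at h2; exact ⟨h1, h2⟩
    · rintro (he | ⟨h1, h2⟩)
      · subst he; exact ⟨hcC, hbar⟩
      · refine ⟨h1, ?_⟩
        by_cases he : u = c
        · subst he; rw [hflip, hbar] at h2; cases h2
        · rw [← hoff u h1 he]; exact h2
  rw [hset, Finset.card_insert_of_notMem]
  simp [Finset.mem_filter, hflip, hbar]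

include hcC habs hoff hbelow in
lemma majStat_flip : majStat μ (IndOf lt1) σ' = majStat μ (IndOf lt1) σ := by
  unfold majStat
  rw [desCells_flip hcC habs hoff hbelow]

include hcC habs hoff hw0 hatt heqv huniq hbelow in
lemma invStat_flip (hflip : (σ' c).2 = !(σ c).2) (hbar : (σ c).2 = false) :
    invStat μ (IndOf lt1) σ' = invStat μ (IndOf lt1) σ + 1 := by
  classical
  obtain ⟨hins, hnotin⟩ := invPairs_flip hcC habs hoff hw0 hatt heqv huniq hflip hbar
  unfold invStat
  rw [desCells_flip hcC habs hoff hbelow, hins, Finset.card_insert_of_notMem hnotin]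
  have h1 := sum_arm_le_card_invPairs μ σ
  unfold invStat at *
  omega

include hcC habs hoff hw0 hatt heqv huniq hbelow in
lemma weight_flip (hflip : (σ' c).2 = !(σ c).2) (hbar : (σ c).2 = false) :
    ((-1 : MvPolynomial (Fin 2) ℤ) ^ negCount μ σ' *
        (X 0 : MvPolynomial (Fin 2) ℤ) ^ (posCount μ σ' + invStat μ (IndOf lt1) σ') *
        (X 1 : MvPolynomial (Fin 2) ℤ) ^ majStat μ (IndOf lt1) σ')
      = -((-1 : MvPolynomial (Fin 2) ℤ) ^ negCount μ σ *
        (X 0 : MvPolynomial (Fin 2) ℤ) ^ (posCount μ σ + invStat μ (IndOf lt1) σ) *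
        (X 1 : MvPolynomial (Fin 2) ℤ) ^ majStat μ (IndOf lt1) σ) := by
  have e1 := negCount_flip hcC hoff hflip hbar
  have e2 := posCount_flip hcC hoff hflip hbar
  have e3 := invStat_flip hcC habs hoff hw0 hatt heqv huniq hbelow hflip hbar
  have e4 := majStat_flip hcC habs hoff hbelow
  have e5 : posCount μ σ' + invStat μ (IndOf lt1) σ'
      = posCount μ σ + invStat μ (IndOf lt1) σ := by omega
  rw [e1, e4, e5, pow_succ]
  ring

end Flip

end Aux

open scoped Classical in
lemma rowCard (μ : List ℕ) (i : ℕ) (h1 : 1 ≤ i) (h2 : i ≤ μ.length) :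
    ((cells μ).filter (fun u => u.1 = i)).card = μ.getD (i - 1) 0 := by
  have hset : (cells μ).filter (fun u => u.1 = i)
      = (Finset.Icc 1 (μ.getD (i - 1) 0)).image (fun j => (i, j)) := by
    ext u
    simp only [Finset.mem_filter, Finset.mem_image, Finset.mem_Icc, mem_cells]
    constructor
    · rintro ⟨⟨_, _, h3, h4⟩, h5⟩
      exact ⟨u.2, ⟨h3, h5 ▸ h4⟩, Prod.ext h5.symm rfl⟩
    · rintro ⟨j, ⟨hj1, hj2⟩, rfl⟩
      exact ⟨⟨h1, h2, hj1, hj2⟩, rfl⟩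
  rw [hset, Finset.card_image_of_injective _ (fun x y hxy => by
    simpa using (Prod.mk.injEq i x i y ▸ hxy : (i, x) = (i, y)))]
  simp

open scoped Classical in
lemma candSet_nonempty_of (μ ρ : List ℕ) (a : ℕ × ℕ → ℕ)
    (ha1 : ∀ u ∈ cells μ, 1 ≤ a u)
    (hcont : ∀ k, 1 ≤ k → ((cells μ).filter (fun u => a u = k)).card = ρ.getD (k - 1) 0)
    (hnd : ∃ m, ∑ j ∈ Finset.range m, conj μ (j + 1) < ∑ i ∈ Finset.range m, ρ.getD i 0) :
    (candSet μ a).Nonempty := by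
  classical
  by_contra hempty
  -- no same-row equal pair
  have hni : ∀ u ∈ cells μ, ∀ v ∈ cells μ, u.1 = v.1 → u ≠ v → a u ≠ a v := by
    intro u hu v hv hrow hne hav
    have hcols : u.2 ≠ v.2 := fun h => hne (Prod.ext hrow h)
    rcases lt_or_gt_of_ne hcols with hl | hl
    · exact hempty ⟨u, mk_cand hu hv (Or.inl ⟨hrow, hl⟩) hav.symm⟩
    · exact hempty ⟨v, mk_cand hv hu (Or.inl ⟨hrow.symm, hl⟩) hav⟩
  obtain ⟨m, hm⟩ := hnd
  set T := (cells μ).filter (fun u => a u ≤ m) with hT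
  -- card T = ∑ ρ
  have hTcard : T.card = ∑ i ∈ Finset.range m, ρ.getD i 0 := by
    have h1 : T.card = ∑ k ∈ Finset.Icc 1 m, (T.filter (fun u => a u = k)).card :=
      Finset.card_eq_sum_card_fiberwise (fun u hu => by
        rw [hT, Finset.mem_coe, Finset.mem_filter] at hu
        rw [Finset.mem_coe, Finset.mem_Icc]
        exact ⟨ha1 u hu.1, hu.2⟩)
    have h2 : ∀ k ∈ Finset.Icc 1 m, (T.filter (fun u => a u = k)).card = ρ.getD (k - 1) 0 := by
      intro k hk
      rw [Finset.mem_Icc] at hk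
      have : T.filter (fun u => a u = k) = (cells μ).filter (fun u => a u = k) := by
        rw [hT, Finset.filter_filter]
        apply Finset.filter_congr
        intro u _
        constructor
        · rintro ⟨_, h⟩; exact h
        · rintro h; exact ⟨by omega, h⟩
      rw [this, hcont k hk.1]
    rw [h1, Finset.sum_congr rfl h2]
    have hicc : Finset.Icc 1 m = (Finset.range m).image (· + 1) := by
      ext x
      simp only [Finset.mem_Icc, Finset.mem_image, Finset.mem_range]
      constructor
      · intro h; exact ⟨x - 1, by omega, by omega⟩
      · rintro ⟨y, hy, rfl⟩; omega
    rw [hicc, Finset.sum_image (by intro x _ y _ h; simpa using h)]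
    simp
  -- rank within row
  let r : ℕ × ℕ → ℕ :=
    fun u => ((cells μ).filter (fun v => v.1 = u.1 ∧ a v ≤ m ∧ a v ≤ a u)).card
  have hrr : ∀ u, r u = ((cells μ).filter (fun v => v.1 = u.1 ∧ a v ≤ m ∧ a v ≤ a u)).card :=
    fun u => rfl
  have hr_pos : ∀ u ∈ T, 1 ≤ r u := by
    intro u hu
    rw [hT, Finset.mem_filter] at hu
    have : u ∈ (cells μ).filter (fun v => v.1 = u.1 ∧ a v ≤ m ∧ a v ≤ a u) := by
      rw [Finset.mem_filter]; exact ⟨hu.1, rfl, hu.2, le_refl _⟩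
    have := Finset.card_pos.mpr ⟨u, this⟩
    rw [hrr]
    omega
  have hr_le_m : ∀ u ∈ T, r u ≤ m := by
    intro u hu
    rw [hrr]
    have : ((cells μ).filter (fun v => v.1 = u.1 ∧ a v ≤ m ∧ a v ≤ a u)).card
        ≤ (Finset.Icc 1 m).card := by
      apply Finset.card_le_card_of_injOn a
      · intro v hv
        rw [Finset.mem_coe, Finset.mem_filter] at hv
        rw [Finset.mem_coe, Finset.mem_Icc]
        exact ⟨ha1 v hv.1, hv.2.2.1⟩
      · intro v hv v' hv' havv
        simp only [Finset.coe_filter, Set.mem_setOf_eq] at hv hv'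
        by_contra hne
        exact hni v hv.1 v' hv'.1 (hv.2.1.trans hv'.2.1.symm) hne havv
    simpa using this
  have hr_le_row : ∀ u ∈ T, r u ≤ μ.getD (u.1 - 1) 0 := by
    intro u hu
    rw [hT, Finset.mem_filter] at hu
    have hmc := mem_cells.mp hu.1
    rw [hrr, ← rowCard μ u.1 hmc.1 hmc.2.1]
    apply Finset.card_le_card
    intro v hv
    rw [Finset.mem_filter] at hv ⊢
    exact ⟨hv.1, hv.2.1⟩
  -- injection into the conj count
  have hle : T.card ≤ ∑ j ∈ Finset.range m, conj μ (j + 1) := by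
    have hrhs : ∑ j ∈ Finset.range m, conj μ (j + 1) =
        ((Finset.range m).sigma (fun j => (Finset.range μ.length).filter
          (fun i => j + 1 ≤ μ.getD i 0))).card := by
      rw [Finset.card_sigma]; rfl
    rw [hrhs]
    apply Finset.card_le_card_of_injOn (fun u => ⟨r u - 1, u.1 - 1⟩)
    · intro u hu
      have h1 := hr_pos u hu
      have h2 := hr_le_m u hu
      have h3 := hr_le_row u hu
      rw [hT, Finset.mem_coe, Finset.mem_filter] at hu
      have hmc := mem_cells.mp hu.1
      refine Finset.mem_sigma.mpr ⟨?_, ?_⟩ <;> dsimp only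
      · rw [Finset.mem_range]; omega
      · rw [Finset.mem_filter, Finset.mem_range]
        exact ⟨by omega, by omega⟩
    · intro u hu u' hu' heq
      have h1 := hr_pos u (by exact hu)
      have h1' := hr_pos u' (by exact hu')
      rw [Finset.mem_coe, hT, Finset.mem_filter] at hu hu'
      have hmc := mem_cells.mp hu.1
      have hmc' := mem_cells.mp hu'.1
      obtain ⟨e1, e2⟩ := Sigma.mk.inj_iff.mp heq
      have e2' : u.1 - 1 = u'.1 - 1 := eq_of_heq e2
      have hrow : u.1 = u'.1 := by omega
      have hre : r u = r u' := by omega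
      by_contra hne
      have hka : a u ≠ a u' := hni u hu.1 u' hu'.1 hrow hne
      -- wlog a u < a u'
      have key : ∀ x y : ℕ × ℕ, x ∈ cells μ → y ∈ cells μ → a x ≤ m → a y ≤ m →
          x.1 = y.1 → a x < a y → r x < r y := by
        intro x y hx hy hxm hym hxyrow hxy
        rw [hrr, hrr]
        apply Finset.card_lt_card
        constructor
        · intro v hv
          rw [Finset.mem_filter] at hv ⊢
          exact ⟨hv.1, hv.2.1.trans hxyrow, hv.2.2.1, by omega⟩
        · intro hsub
          have hyy : y ∈ (cells μ).filter (fun v => v.1 = y.1 ∧ a v ≤ m ∧ a v ≤ a y) := by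
            rw [Finset.mem_filter]; exact ⟨hy, rfl, hym, le_refl _⟩
          have := hsub hyy
          rw [Finset.mem_filter] at this
          omega
      rcases lt_or_gt_of_ne hka with hl | hl
      · have := key u u' hu.1 hu'.1 hu.2 hu'.2 hrow hl
        omega
      · have := key u' u hu'.1 hu.1 hu'.2 hu.2 hrow.symm hl
        omega
  omega

open scoped Classical in
/-- The distinguished cell at which the sign-reversing involution flips the bar. -/
noncomputable def theC (μ : List ℕ) {N : ℕ} (f : {u // u ∈ cells μ} → Fin N × Bool) : ℕ × ℕ :=
  lastCell (candSet μ (fun u => sAbs (superFill μ f u)))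

open scoped Classical in
/-- The sign-reversing involution: flip the bar of the entry at `theC μ f`. -/
noncomputable def flipF (μ : List ℕ) {N : ℕ} (f : {u // u ∈ cells μ} → Fin N × Bool) :
    {u // u ∈ cells μ} → Fin N × Bool :=
  fun u => if u.val = theC μ f then ((f u).1, !(f u).2) else f u

lemma superFill_mem {μ : List ℕ} {N : ℕ} (f : {u // u ∈ cells μ} → Fin N × Bool)
    {u : ℕ × ℕ} (h : u ∈ cells μ) :
    superFill μ f u = ((f ⟨u, h⟩).1.val, (f ⟨u, h⟩).2) := by
  unfold superFill extendF
  rw [dif_pos h]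

lemma flipF_abs {μ : List ℕ} {N : ℕ} (f : {u // u ∈ cells μ} → Fin N × Bool) (u : ℕ × ℕ) :
    (superFill μ (flipF μ f) u).1 = (superFill μ f u).1 := by
  by_cases h : u ∈ cells μ
  · rw [superFill_mem _ h, superFill_mem _ h]
    unfold flipF
    by_cases he : u = theC μ f <;> simp [he]
  · unfold superFill extendF
    rw [dif_neg h, dif_neg h]

lemma flipF_sAbs {μ : List ℕ} {N : ℕ} (f : {u // u ∈ cells μ} → Fin N × Bool) :
    (fun u => sAbs (superFill μ (flipF μ f) u)) = (fun u => sAbs (superFill μ f u)) := by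
  funext u
  unfold sAbs
  rw [flipF_abs]

lemma theC_flipF {μ : List ℕ} {N : ℕ} (f : {u // u ∈ cells μ} → Fin N × Bool) :
    theC μ (flipF μ f) = theC μ f := by
  unfold theC
  rw [flipF_sAbs]

lemma flipF_flipF {μ : List ℕ} {N : ℕ} (f : {u // u ∈ cells μ} → Fin N × Bool) :
    flipF μ (flipF μ f) = f := by
  funext u
  have step : flipF μ (flipF μ f) u
      = if u.val = theC μ (flipF μ f) then ((flipF μ f u).1, !(flipF μ f u).2)
        else flipF μ f u := rfl
  rw [step, theC_flipF]
  by_cases he : u.val = theC μ f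
  · rw [if_pos he]
    unfold flipF
    simp [he]
  · rw [if_neg he]
    unfold flipF
    rw [if_neg he]

lemma flipF_off {μ : List ℕ} {N : ℕ} (f : {u // u ∈ cells μ} → Fin N × Bool)
    {u : ℕ × ℕ} (h : u ∈ cells μ) (hne : u ≠ theC μ f) :
    superFill μ (flipF μ f) u = superFill μ f u := by
  rw [superFill_mem _ h, superFill_mem _ h]
  unfold flipF
  rw [if_neg (by exact hne)]

lemma flipF_at {μ : List ℕ} {N : ℕ} (f : {u // u ∈ cells μ} → Fin N × Bool)
    (h : theC μ f ∈ cells μ) :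
    (superFill μ (flipF μ f) (theC μ f)).2 = !(superFill μ f (theC μ f)).2 := by
  rw [superFill_mem _ h, superFill_mem _ h]
  unfold flipF
  rw [if_pos rfl]

open scoped Classical in
/-- With the order `<₁` on the super alphabet: if `ρ` is a
partition of `n = |μ|` with `ρ ≰ μ'` in dominance order, then
`Σ_σ (−1)^{m(σ)} q^{p(σ)+inv(σ)} t^{maj(σ)} = 0`, the sum being over all super
fillings `σ : dg(μ) → A` whose absolute values have content `ρ`. -/
theorem psi_cancellation_not_dominated (n : ℕ) (μ ρ : List ℕ)
    (hμ : IsPartitionList μ) (hρ : IsPartitionList ρ)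
    (hμn : μ.sum = n) (hρn : ρ.sum = n)
    (hnd : ∃ m, ∑ j ∈ Finset.range m, conj μ (j + 1) < ∑ i ∈ Finset.range m, ρ.getD i 0) :
    ∑ f ∈ Finset.univ.filter (fun f : {u // u ∈ cells μ} → Fin ρ.length × Bool =>
        ∀ k, 1 ≤ k →
          ((cells μ).filter fun u => sAbs (superFill μ f u) = k).card
            = ρ.getD (k - 1) 0),
      ((-1 : MvPolynomial (Fin 2) ℤ) ^ negCount μ (superFill μ f) *
        (X 0 : MvPolynomial (Fin 2) ℤ) ^
          (posCount μ (superFill μ f) + invStat μ (IndOf lt1) (superFill μ f)) *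
        (X 1 : MvPolynomial (Fin 2) ℤ) ^ majStat μ (IndOf lt1) (superFill μ f))
      = 0 := by
  classical
  apply Finset.sum_involution (fun f _ => flipF μ f)
  · -- paired terms cancel
    intro f hf
    rw [Finset.mem_filter] at hf
    set σ := superFill μ f with hσ
    set σ' := superFill μ (flipF μ f) with hσ'
    have hne : (candSet μ (fun u => sAbs (σ u))).Nonempty :=
      candSet_nonempty_of μ ρ _ (fun u _ => Nat.succ_le_succ (Nat.zero_le _)) hf.2 hnd
    set c := lastCell (candSet μ (fun u => sAbs (σ u))) with hcdef
    have hclc : theC μ f = c := rfl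
    have hcc : c ∈ cells μ := lastCell_cells hne
    have habs : ∀ u ∈ cells μ, (σ' u).1 = (σ u).1 := fun u _ => flipF_abs f u
    have hoff : ∀ u ∈ cells μ, u ≠ c → σ' u = σ u :=
      fun u hu hneu => flipF_off f hu (by rw [hclc]; exact hneu)
    have hflip : (σ' c).2 = !(σ c).2 := by
      rw [← hclc]; exact flipF_at f (by rw [hclc]; exact hcc)
    obtain ⟨w₀, hw0, hatt, heqv'⟩ := pick_exists hne
    rw [← hcdef] at hatt heqv'
    have heqv : (σ w₀).1 = (σ c).1 := Nat.succ_injective heqv'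
    have huniq : ∀ w ∈ cells μ, AttackOrd c w → (σ w).1 = (σ c).1 → w = w₀ := by
      intro w hw hatw hfst
      refine pick_unique hne hw hw0 ?_ ?_ ?_ ?_
      · rw [← hcdef]; exact hatw
      · rw [← hcdef]; exact congrArg Nat.succ hfst
      · rw [← hcdef]; exact hatt
      · rw [← hcdef]; exact heqv'
    have hbelow : (c.1 - 1, c.2) ∈ cells μ → (σ (c.1 - 1, c.2)).1 ≠ (σ c).1 := by
      intro hbmem hfst
      refine pick_below hne ?_ ?_
      · rw [← hcdef]; exact hbmem
      · rw [← hcdef]; exact congrArg Nat.succ hfst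
    by_cases hbar : (σ c).2 = false
    · have hw := weight_flip hcc habs hoff hw0 hatt heqv huniq hbelow hflip hbar
      rw [hw]; ring
    · have hbar' : (σ c).2 = true := by
        cases hσc : (σ c).2
        · exact absurd hσc hbar
        · rfl
      have habs' : ∀ u ∈ cells μ, (σ u).1 = (σ' u).1 := fun u hu => (habs u hu).symm
      have hoff' : ∀ u ∈ cells μ, u ≠ c → σ u = σ' u := fun u hu hneu => (hoff u hu hneu).symm
      have hflip' : (σ c).2 = !(σ' c).2 := by rw [hflip]; exact (Bool.not_not _).symm
      have hbar2 : (σ' c).2 = false := by rw [hflip, hbar']; rfl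
      have heqv2 : (σ' w₀).1 = (σ' c).1 := by rw [habs w₀ hw0, habs c hcc]; exact heqv
      have huniq2 : ∀ w ∈ cells μ, AttackOrd c w → (σ' w).1 = (σ' c).1 → w = w₀ := by
        intro w hw hatw h
        apply huniq w hw hatw
        rw [← habs w hw, ← habs c hcc]; exact h
      have hbelow2 : (c.1 - 1, c.2) ∈ cells μ → (σ' (c.1 - 1, c.2)).1 ≠ (σ' c).1 := by
        intro hbmem h
        apply hbelow hbmem
        rw [← habs _ hbmem, ← habs c hcc]; exact h
      have hw := weight_flip hcc habs' hoff' hw0 hatt heqv2 huniq2 hbelow2 hflip' hbar2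
      rw [hw]; ring
  · -- the involution has no fixed points
    intro f hf _
    rw [Finset.mem_filter] at hf
    have hne : (candSet μ (fun u => sAbs (superFill μ f u))).Nonempty :=
      candSet_nonempty_of μ ρ _ (fun u _ => by unfold sAbs; omega) hf.2 hnd
    have hcc : theC μ f ∈ cells μ := lastCell_cells hne
    intro heqf
    have := congrFun heqf ⟨theC μ f, hcc⟩
    unfold flipF at this
    rw [if_pos rfl] at this
    have h2 := congrArg Prod.snd this
    simp at h2
  · -- the involution preserves the content condition
    intro f hf
    rw [Finset.mem_filter] at hf ⊢
    refine ⟨Finset.mem_univ _, ?_⟩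
    intro k hk
    rw [← hf.2 k hk]
    apply congrArg
    apply Finset.filter_congr
    intro u _
    unfold sAbs
    rw [flipF_abs]
  · -- it is an involution
    intro f hf
    exact flipF_flipF f

end HHL
end

section
/- Let μ be a partition of n and 0 ≤ d ≤ n. Use the super alphabet restricted to {1, 1̄} with the order 1 < 1̄. Then Σ_σ q^{inv(σ)} t^{maj(σ)}, summed over all super fillings σ : dg(μ) → {1, 1̄} with exactly d entries equal to 1̄, equals the d-th elementary symmetric polynomial of the monomials {t^{i−1} q^{j−1} : (i,j) ∈ dg(μ)}, i.e. Σ_{S ⊆ dg(μ), |S| = d} ∏_{(i,j) ∈ S} t^{i−1} q^{j−1}. (Equivalently, the coefficient of (−u)^d in H̃_μ[1−u;q,t] is e_d[B_μ], where B_μ = Σ_{(i,j)∈μ} t^{i−1}q^{j−1}.) -/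
open Finset MvPolynomial

namespace HHL

lemma le_foldr_max {μ : List ℕ} {x : ℕ} (hx : x ∈ μ) : x ≤ μ.foldr max 0 := by
  induction μ with
  | nil => simp at hx
  | cons a l ih =>
      rcases List.mem_cons.mp hx with h | h
      · subst h; simp [List.foldr]
      · have := ih h; simp only [List.foldr]; omega

lemma getD_mono {μ : List ℕ} (hμ : IsPartitionList μ) {a b : ℕ} (hab : a ≤ b)
    (hb : b < μ.length) : μ.getD b 0 ≤ μ.getD a 0 := by
  rcases eq_or_lt_of_le hab with rfl | h
  · exact le_rfl
  · have ha : a < μ.length := lt_trans h hb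
    rw [List.getD_eq_getElem _ _ hb, List.getD_eq_getElem _ _ ha]
    exact (List.pairwise_iff_getElem.mp hμ.1) a b ha hb h

/-- A downward-closed finite set of positive integers is an initial interval. -/
lemma dc_eq_Icc (S : Finset ℕ) (h1 : ∀ a ∈ S, 1 ≤ a)
    (hdc : ∀ a ∈ S, ∀ b, 1 ≤ b → b ≤ a → b ∈ S) : S = Finset.Icc 1 S.card := by
  ext x
  simp only [Finset.mem_Icc]
  constructor
  · intro hx
    refine ⟨h1 x hx, ?_⟩
    have hsub : Finset.Icc 1 x ⊆ S := by
      intro b hb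
      rw [Finset.mem_Icc] at hb
      exact hdc x hx b hb.1 hb.2
    have := Finset.card_le_card hsub
    simpa using this
  · rintro ⟨hx1, hx2⟩
    by_contra hxS
    have hsub : S ⊆ Finset.Icc 1 (x - 1) := by
      intro a ha
      rw [Finset.mem_Icc]
      refine ⟨h1 a ha, ?_⟩
      by_contra hax
      exact hxS (hdc a ha x hx1 (by omega))
    have := Finset.card_le_card hsub
    rw [Nat.card_Icc] at this
    omega

def colCount (μ : List ℕ) (j : ℕ) : ℕ :=
  ((Finset.Icc 1 μ.length).filter fun r => j ≤ μ.getD (r - 1) 0).card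

lemma mem_cells_col {μ : List ℕ} (hμ : IsPartitionList μ) {r j : ℕ} (hj : 1 ≤ j) :
    (r, j) ∈ cells μ ↔ 1 ≤ r ∧ r ≤ colCount μ j := by
  set S := (Finset.Icc 1 μ.length).filter fun r => j ≤ μ.getD (r - 1) 0 with hS
  have hmem : ∀ r', r' ∈ S ↔ (1 ≤ r' ∧ r' ≤ μ.length) ∧ j ≤ μ.getD (r' - 1) 0 := by
    intro r'; simp [hS, Finset.mem_filter, Finset.mem_Icc]
  have hI : S = Finset.Icc 1 S.card := by
    apply dc_eq_Icc
    · intro a ha; exact ((hmem a).mp ha).1.1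
    · intro a ha b hb1 hba
      rcases (hmem a).mp ha with ⟨⟨ha1, ha2⟩, ha3⟩
      refine (hmem b).mpr ⟨⟨hb1, le_trans hba ha2⟩, le_trans ha3 ?_⟩
      exact getD_mono hμ (by omega) (by omega)
  have : (r, j) ∈ cells μ ↔ r ∈ S := by
    rw [mem_cells, hmem]
    constructor
    · rintro ⟨a, b, _, c⟩; exact ⟨⟨a, b⟩, c⟩
    · rintro ⟨⟨a, b⟩, c⟩; exact ⟨a, b, hj, c⟩
  rw [this, hI, Finset.mem_Icc, colCount, hS]

lemma row_le_colCount {μ : List ℕ} (hμ : IsPartitionList μ) {u : ℕ × ℕ}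
    (hu : u ∈ cells μ) : u.1 ≤ colCount μ u.2 := by
  have hj : 1 ≤ u.2 := (mem_cells.mp hu).2.2.1
  have := (mem_cells_col hμ hj).mp (by rwa [← Prod.mk.eta (p := u)] at hu)
  exact this.2

lemma arm_eq {μ : List ℕ} {u : ℕ × ℕ} (hu : u ∈ cells μ) :
    arm μ u = μ.getD (u.1 - 1) 0 - u.2 := by
  rcases mem_cells.mp hu with ⟨h1, h2, h3, h4⟩
  have hset : (cells μ).filter (fun v => v.1 = u.1 ∧ u.2 < v.2)
      = (Finset.Ioc u.2 (μ.getD (u.1 - 1) 0)).image (fun k => (u.1, k)) := by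
    ext v
    simp only [Finset.mem_filter, Finset.mem_image, Finset.mem_Ioc, mem_cells]
    constructor
    · rintro ⟨⟨a, b, c, d⟩, e, f⟩
      exact ⟨v.2, ⟨f, by rw [e] at d; exact d⟩, by rw [← e]⟩
    · rintro ⟨k, ⟨hk1, hk2⟩, rfl⟩
      exact ⟨⟨h1, h2, by omega, hk2⟩, rfl, hk1⟩
  rw [arm, hset, Finset.card_image_of_injective _ (fun a b h => by simpa using h),
    Nat.card_Ioc]

lemma leg_eq {μ : List ℕ} (hμ : IsPartitionList μ) {u : ℕ × ℕ} (hu : u ∈ cells μ) :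
    leg μ u = colCount μ u.2 - u.1 := by
  rcases mem_cells.mp hu with ⟨h1, h2, h3, h4⟩
  have hset : (cells μ).filter (fun v => v.2 = u.2 ∧ u.1 < v.1)
      = (Finset.Ioc u.1 (colCount μ u.2)).image (fun r => (r, u.2)) := by
    ext v
    simp only [Finset.mem_filter, Finset.mem_image, Finset.mem_Ioc]
    constructor
    · rintro ⟨hv, e, f⟩
      refine ⟨v.1, ⟨f, ?_⟩, by rw [← e]⟩
      have : (v.1, u.2) ∈ cells μ := by rw [← e]; simpa [Prod.mk.eta] using hv
      exact ((mem_cells_col hμ h3).mp this).2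
    · rintro ⟨r, ⟨hr1, hr2⟩, rfl⟩
      exact ⟨(mem_cells_col hμ h3).mpr ⟨by omega, hr2⟩, rfl, hr1⟩
  rw [leg, hset, Finset.card_image_of_injective _ (fun a b h => by simpa using h),
    Nat.card_Ioc]

lemma below_card {μ : List ℕ} (hμ : IsPartitionList μ) {u : ℕ × ℕ} (hu : u ∈ cells μ) :
    ((cells μ).filter (fun v => u.1 = v.1 + 1 ∧ v.2 < u.2)).card
      = if 2 ≤ u.1 then u.2 - 1 else 0 := by
  rcases mem_cells.mp hu with ⟨h1, h2, h3, h4⟩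
  by_cases h2u : 2 ≤ u.1
  · rw [if_pos h2u]
    have hset : (cells μ).filter (fun v => u.1 = v.1 + 1 ∧ v.2 < u.2)
        = (Finset.Ico 1 u.2).image (fun k => (u.1 - 1, k)) := by
      ext v
      simp only [Finset.mem_filter, Finset.mem_image, Finset.mem_Ico]
      constructor
      · rintro ⟨hv, e, f⟩
        exact ⟨v.2, ⟨(mem_cells.mp hv).2.2.1, f⟩, by
          rw [Prod.ext_iff]; exact ⟨by omega, rfl⟩⟩
      · rintro ⟨k, ⟨hk1, hk2⟩, rfl⟩
        refine ⟨mem_cells.mpr ⟨by omega, by omega, hk1, ?_⟩, by omega, hk2⟩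
        show k ≤ μ.getD (u.1 - 1 - 1) 0
        have : μ.getD (u.1 - 1) 0 ≤ μ.getD (u.1 - 1 - 1) 0 :=
          getD_mono hμ (by omega) (by omega)
        omega
    rw [hset, Finset.card_image_of_injective _ (fun a b h => by simpa using h),
      Nat.card_Ico]
  · rw [if_neg h2u]
    rw [Finset.card_eq_zero, Finset.filter_eq_empty_iff]
    intro v hv
    have := (mem_cells.mp hv).1
    omega

lemma att_card {μ : List ℕ} (hμ : IsPartitionList μ) {u : ℕ × ℕ} (hu : u ∈ cells μ) :
    ((cells μ).filter (fun v => AttackOrd u v)).card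
      = arm μ u + (if 2 ≤ u.1 then u.2 - 1 else 0) := by
  have hsplit : (cells μ).filter (fun v => AttackOrd u v)
      = (cells μ).filter (fun v => v.1 = u.1 ∧ u.2 < v.2)
        ∪ (cells μ).filter (fun v => u.1 = v.1 + 1 ∧ v.2 < u.2) := by
    rw [← Finset.filter_or]
    apply Finset.filter_congr
    intro v _
    unfold AttackOrd
    omega
  rw [hsplit, Finset.card_union_of_disjoint, ← arm, below_card hμ hu]
  rw [Finset.disjoint_left]
  rintro v hv hv'
  have h1 := (Finset.mem_filter.mp hv).2
  have h2 := (Finset.mem_filter.mp hv').2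
  omega

lemma boolFill_fst (μ : List ℕ) (f : {u // u ∈ cells μ} → Bool) (u : ℕ × ℕ) :
    (boolFill μ f u).1 = 0 := by
  unfold boolFill extendF
  split <;> rfl

lemma ind_boolFill (μ : List ℕ) (f : {u // u ∈ cells μ} → Bool) (u v : ℕ × ℕ) :
    IndOf lt1 (boolFill μ f u) (boolFill μ f v) ↔ (boolFill μ f u).2 = true := by
  have hu := boolFill_fst μ f u
  have hv := boolFill_fst μ f v
  rcases hx : boolFill μ f u with ⟨a, b⟩
  rcases hy : boolFill μ f v with ⟨c, e⟩
  rw [hx] at hu; rw [hy] at hv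
  subst hu; subst hv
  cases b <;> cases e <;> decide

/-- The set of negative (barred) cells of a boolean filling. -/
def negSet (μ : List ℕ) (f : {u // u ∈ cells μ} → Bool) : Finset (ℕ × ℕ) :=
  (cells μ).filter fun u => (boolFill μ f u).2 = true

lemma negCount_eq (μ : List ℕ) (f : {u // u ∈ cells μ} → Bool) :
    negCount μ (boolFill μ f) = (negSet μ f).card := rfl

lemma desCells_eq {μ : List ℕ} (hμ : IsPartitionList μ) (f : {u // u ∈ cells μ} → Bool) :
    desCells μ (IndOf lt1) (boolFill μ f) = (negSet μ f).filter (fun u => 2 ≤ u.1) := by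
  unfold desCells negSet
  rw [Finset.filter_filter]
  apply Finset.filter_congr
  intro u hu
  rw [ind_boolFill]
  rcases mem_cells.mp hu with ⟨h1, h2, h3, h4⟩
  constructor
  · rintro ⟨hc, hb⟩
    have := (mem_cells.mp hc).1
    exact ⟨hb, by omega⟩
  · rintro ⟨hb, h2u⟩
    refine ⟨mem_cells.mpr ⟨by omega, by omega, h3, ?_⟩, hb⟩
    show u.2 ≤ μ.getD (u.1 - 1 - 1) 0
    have := getD_mono hμ (a := u.1 - 1 - 1) (b := u.1 - 1) (by omega) (by omega)
    omega

def wq (μ : List ℕ) (u : ℕ × ℕ) : ℕ := if 2 ≤ u.1 then u.2 - 1 else arm μ u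

def wt (μ : List ℕ) (u : ℕ × ℕ) : ℕ := if 2 ≤ u.1 then leg μ u + 1 else 0

lemma invPairs_card {μ : List ℕ} (hμ : IsPartitionList μ)
    (f : {u // u ∈ cells μ} → Bool) :
    (invPairs μ (IndOf lt1) (boolFill μ f)).card
      = ∑ u ∈ negSet μ f, (arm μ u + if 2 ≤ u.1 then u.2 - 1 else 0) := by
  unfold invPairs
  rw [Finset.card_filter, Finset.sum_product]
  have step : ∀ u ∈ cells μ,
      (∑ v ∈ cells μ, if AttackOrd u v ∧ IndOf lt1 (boolFill μ f u) (boolFill μ f v)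
        then 1 else 0)
      = if (boolFill μ f u).2 = true
          then (arm μ u + if 2 ≤ u.1 then u.2 - 1 else 0) else 0 := by
    intro u hu
    by_cases hb : (boolFill μ f u).2 = true
    · rw [if_pos hb, ← att_card hμ hu, Finset.card_filter]
      apply Finset.sum_congr rfl
      intro v _
      congr 1
      simp [ind_boolFill, hb]
    · rw [if_neg hb]
      apply Finset.sum_eq_zero
      intro v _
      rw [if_neg]
      rintro ⟨_, hi⟩
      exact hb ((ind_boolFill μ f u v).mp hi)
  rw [Finset.sum_congr rfl step, ← Finset.sum_filter]
  rfl

lemma majStat_eq {μ : List ℕ} (hμ : IsPartitionList μ) (f : {u // u ∈ cells μ} → Bool) :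
    majStat μ (IndOf lt1) (boolFill μ f) = ∑ u ∈ negSet μ f, wt μ u := by
  unfold majStat wt
  rw [desCells_eq hμ f, Finset.sum_filter]

lemma invStat_eq {μ : List ℕ} (hμ : IsPartitionList μ) (f : {u // u ∈ cells μ} → Bool) :
    invStat μ (IndOf lt1) (boolFill μ f) = ∑ u ∈ negSet μ f, wq μ u := by
  unfold invStat
  rw [invPairs_card hμ f, desCells_eq hμ f, Finset.sum_filter]
  have key : ∑ u ∈ negSet μ f, (arm μ u + if 2 ≤ u.1 then u.2 - 1 else 0)
      = (∑ u ∈ negSet μ f, wq μ u) + ∑ u ∈ negSet μ f, (if 2 ≤ u.1 then arm μ u else 0) := by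
    rw [← Finset.sum_add_distrib]
    apply Finset.sum_congr rfl
    intro u _
    unfold wq
    by_cases h : 2 ≤ u.1 <;> simp [h] <;> try omega
  rw [key, Nat.add_sub_cancel]

/-- The involution on the cells of `μ` matching the statistics to the monomials. -/
def phi (μ : List ℕ) (u : ℕ × ℕ) : ℕ × ℕ :=
  if u.1 = 1 then (1, μ.getD 0 0 + 1 - u.2) else (colCount μ u.2 + 2 - u.1, u.2)

lemma phi_mem {μ : List ℕ} (hμ : IsPartitionList μ) {u : ℕ × ℕ} (hu : u ∈ cells μ) :
    phi μ u ∈ cells μ := by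
  rcases mem_cells.mp hu with ⟨h1, h2, h3, h4⟩
  unfold phi
  by_cases he : u.1 = 1
  · rw [if_pos he]
    rw [he] at h4
    simp only [show (1:ℕ) - 1 = 0 from rfl] at h4
    refine mem_cells.mpr ⟨le_rfl, by omega, by omega, ?_⟩
    show μ.getD 0 0 + 1 - u.2 ≤ μ.getD 0 0
    omega
  · rw [if_neg he]
    have hc := row_le_colCount hμ hu
    exact (mem_cells_col hμ h3).mpr ⟨by omega, by omega⟩

lemma phi_phi {μ : List ℕ} (hμ : IsPartitionList μ) {u : ℕ × ℕ} (hu : u ∈ cells μ) :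
    phi μ (phi μ u) = u := by
  have hc := row_le_colCount hμ hu
  obtain ⟨i, j⟩ := u
  rcases mem_cells.mp hu with ⟨h1, h2, h3, h4⟩
  simp only at h1 h2 h3 h4 hc
  by_cases he : i = 1
  · subst he
    have hj : j ≤ μ[0]?.getD 0 := by simpa using h4
    simp [phi]
    omega
  · have hne : ¬ (colCount μ j + 2 - i = 1) := by omega
    simp [phi, he, hne]
    omega

lemma phi_fst {μ : List ℕ} (hμ : IsPartitionList μ) {u : ℕ × ℕ} (hu : u ∈ cells μ) :
    (phi μ u).1 - 1 = wt μ u := by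
  rcases mem_cells.mp hu with ⟨h1, h2, h3, h4⟩
  unfold phi wt
  by_cases he : 2 ≤ u.1
  · rw [if_neg (by omega), if_pos he]
    have hc := row_le_colCount hμ hu
    rw [leg_eq hμ hu]
    simp only
    omega
  · rw [if_pos (by omega), if_neg he]
    rfl

lemma phi_snd {μ : List ℕ} (hμ : IsPartitionList μ) {u : ℕ × ℕ} (hu : u ∈ cells μ) :
    (phi μ u).2 - 1 = wq μ u := by
  rcases mem_cells.mp hu with ⟨h1, h2, h3, h4⟩
  unfold phi wq
  by_cases he : 2 ≤ u.1
  · rw [if_neg (by omega), if_pos he]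
  · rw [if_pos (by omega), if_neg he]
    rw [arm_eq hu]
    have : u.1 - 1 = 0 := by omega
    rw [this]
    simp only
    omega

lemma mem_negSet {μ : List ℕ} (f : {u // u ∈ cells μ} → Bool) (u : {u // u ∈ cells μ}) :
    u.1 ∈ negSet μ f ↔ f u = true := by
  simp only [negSet, Finset.mem_filter, boolFill, extendF, dif_pos u.2]
  simp [u.2]

lemma negSet_decide {μ : List ℕ} (S : Finset (ℕ × ℕ)) (hS : S ⊆ cells μ) :
    negSet μ (fun u => decide (u.1 ∈ S)) = S := by
  ext u
  simp only [negSet, Finset.mem_filter]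
  constructor
  · rintro ⟨hc, hb⟩
    simp only [boolFill, extendF, dif_pos hc] at hb
    simpa using hb
  · intro hu
    have hc := hS hu
    refine ⟨hc, ?_⟩
    simp only [boolFill, extendF, dif_pos hc]
    simpa using hu

/-- Let `μ` be a partition of `n`, `0 ≤ d ≤ n`, and use the
alphabet `{1, 1̄}` with `1 < 1̄`.  Then `Σ_σ q^{inv(σ)} t^{maj(σ)}` over super
fillings `σ : dg(μ) → {1, 1̄}` with exactly `d` entries `1̄` equals the `d`-th
elementary symmetric polynomial of the monomials `t^{i−1} q^{j−1}`,
`(i,j) ∈ dg(μ)`.  (Equivalently: the coefficient of `(−u)^d` in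
`H̃_μ[1−u;q,t]` is `e_d[B_μ]`.) -/
theorem hook_coefficient_specialization (n : ℕ) (μ : List ℕ)
    (hμ : IsPartitionList μ) (hn : μ.sum = n) (d : ℕ) (hd : d ≤ n) :
    ∑ f ∈ Finset.univ.filter (fun f : {u // u ∈ cells μ} → Bool =>
        negCount μ (boolFill μ f) = d),
      ((X 0 : MvPolynomial (Fin 2) ℤ) ^ invStat μ (IndOf lt1) (boolFill μ f) *
       (X 1 : MvPolynomial (Fin 2) ℤ) ^ majStat μ (IndOf lt1) (boolFill μ f))
    = ∑ S ∈ (cells μ).powersetCard d,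
        ∏ u ∈ S,
          (X 1 : MvPolynomial (Fin 2) ℤ) ^ (u.1 - 1) *
            (X 0 : MvPolynomial (Fin 2) ℤ) ^ (u.2 - 1) := by
  classical
  have step1 : ∑ f ∈ Finset.univ.filter (fun f : {u // u ∈ cells μ} → Bool =>
        negCount μ (boolFill μ f) = d),
      ((X 0 : MvPolynomial (Fin 2) ℤ) ^ invStat μ (IndOf lt1) (boolFill μ f) *
       (X 1 : MvPolynomial (Fin 2) ℤ) ^ majStat μ (IndOf lt1) (boolFill μ f))
      = ∑ S ∈ (cells μ).powersetCard d,
          ∏ u ∈ S, ((X 0 : MvPolynomial (Fin 2) ℤ) ^ wq μ u *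
            (X 1 : MvPolynomial (Fin 2) ℤ) ^ wt μ u) := by
    refine Finset.sum_nbij' (i := fun f => negSet μ f)
      (j := fun S => fun u => decide (u.1 ∈ S)) ?_ ?_ ?_ ?_ ?_
    · intro f hf
      rw [Finset.mem_filter] at hf
      rw [Finset.mem_powersetCard]
      exact ⟨Finset.filter_subset _ _, by rw [← negCount_eq]; exact hf.2⟩
    · intro S hS
      rw [Finset.mem_powersetCard] at hS
      rw [Finset.mem_filter]
      exact ⟨Finset.mem_univ _, by rw [negCount_eq, negSet_decide S hS.1]; exact hS.2⟩
    · intro f hf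
      funext u
      by_cases h : f u = true
      · simp [mem_negSet, h]
      · simp [mem_negSet, h]
    · intro S hS
      rw [Finset.mem_powersetCard] at hS
      exact negSet_decide S hS.1
    · intro f hf
      rw [invStat_eq hμ f, majStat_eq hμ f, ← Finset.prod_pow_eq_pow_sum,
        ← Finset.prod_pow_eq_pow_sum, ← Finset.prod_mul_distrib]
  rw [step1]
  refine Finset.sum_nbij' (i := fun S => S.image (phi μ))
    (j := fun S => S.image (phi μ)) ?_ ?_ ?_ ?_ ?_
  · intro S hS
    rw [Finset.mem_powersetCard] at hS ⊢
    constructor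
    · intro v hv
      rw [Finset.mem_image] at hv
      obtain ⟨u, hu, rfl⟩ := hv
      exact phi_mem hμ (hS.1 hu)
    · rw [Finset.card_image_of_injOn, hS.2]
      intro a ha b hb hab
      have := phi_phi hμ (hS.1 ha)
      rw [hab, phi_phi hμ (hS.1 hb)] at this
      exact this.symm
  · intro S hS
    rw [Finset.mem_powersetCard] at hS ⊢
    constructor
    · intro v hv
      rw [Finset.mem_image] at hv
      obtain ⟨u, hu, rfl⟩ := hv
      exact phi_mem hμ (hS.1 hu)
    · rw [Finset.card_image_of_injOn, hS.2]
      intro a ha b hb hab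
      have := phi_phi hμ (hS.1 ha)
      rw [hab, phi_phi hμ (hS.1 hb)] at this
      exact this.symm
  · intro S hS
    rw [Finset.mem_powersetCard] at hS
    show (S.image (phi μ)).image (phi μ) = S
    rw [Finset.image_image]
    have h2 : Finset.image (phi μ ∘ phi μ) S = Finset.image id S :=
      Finset.image_congr (fun x hx => phi_phi hμ (hS.1 hx))
    rw [h2, Finset.image_id]
  · intro S hS
    rw [Finset.mem_powersetCard] at hS
    show (S.image (phi μ)).image (phi μ) = S
    rw [Finset.image_image]
    have h2 : Finset.image (phi μ ∘ phi μ) S = Finset.image id S :=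
      Finset.image_congr (fun x hx => phi_phi hμ (hS.1 hx))
    rw [h2, Finset.image_id]
  · intro S hS
    rw [Finset.mem_powersetCard] at hS
    rw [Finset.prod_image]
    · apply Finset.prod_congr rfl
      intro u hu
      rw [phi_fst hμ (hS.1 hu), phi_snd hμ (hS.1 hu), mul_comm]
    · intro a ha b hb hab
      have := phi_phi hμ (hS.1 ha)
      rw [hab, phi_phi hμ (hS.1 hb)] at this
      exact this.symm

end HHL
end
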